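/- arXiv:2107.08109 — 4 statements merged into one kernel-verified Lean document; each statement's English description precedes it below -/
import Mathlib

section
/- Let 𝒳 be a rearrangement-invariant Banach function space over a non-atomic probability space with 𝒳 ≠ L^∞, and let 𝒳_a = {X ∈ 𝒳 : lim_{ℙ(A)→0} ‖X·1_A‖ = 0}. Define ρ : 𝒳 → ℝ by ρ(X) = d(X⁻, 𝒳_a) − E[X], where d denotes distance in the norm of 𝒳. Then ρ is subadditive: ρ(X₁ + X₂) ≤ ρ(X₁) + ρ(X₂) for all X₁, X₂ ∈ 𝒳. -/
open MeasureTheory Filter Set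

/-- A rearrangement-invariant Banach function space over a measure space,
encoded as a set of (everywhere-defined) random variables together with a norm. -/
structure RISpace {Ω : Type} [MeasurableSpace Ω] (μ : Measure Ω) where
  carrier : Set (Ω → ℝ)
  N : (Ω → ℝ) → ℝ
  zero_mem : (0 : Ω → ℝ) ∈ carrier
  add_mem : ∀ {X Y : Ω → ℝ}, X ∈ carrier → Y ∈ carrier → X + Y ∈ carrier
  smul_mem : ∀ (c : ℝ) {X : Ω → ℝ}, X ∈ carrier → c • X ∈ carrier
  nontrivial : ∃ X ∈ carrier, ¬ (X =ᵐ[μ] 0)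
  aemeasurable : ∀ X ∈ carrier, AEMeasurable X μ
  norm_nonneg' : ∀ X : Ω → ℝ, 0 ≤ N X
  norm_zero' : N 0 = 0
  norm_triangle : ∀ X Y : Ω → ℝ, X ∈ carrier → Y ∈ carrier → N (X + Y) ≤ N X + N Y
  norm_smul' : ∀ (c : ℝ) (X : Ω → ℝ), N (c • X) = |c| * N X
  solid : ∀ X ∈ carrier, ∀ Y : Ω → ℝ, AEMeasurable Y μ →
    (∀ᵐ ω ∂μ, |Y ω| ≤ |X ω|) → Y ∈ carrier ∧ N Y ≤ N X
  ri : ∀ X ∈ carrier, ∀ Z : Ω → ℝ, AEMeasurable Z μ →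
    μ.map Z = μ.map X → Z ∈ carrier ∧ N Z = N X
  integrable' : ∀ X ∈ carrier, Integrable X μ
  const_mem : ∀ c : ℝ, (fun _ => c) ∈ carrier
  norm_le_L1 : ∃ C > 0, ∀ X ∈ carrier, ∫ ω, |X ω| ∂μ ≤ C * N X
  complete : ∀ f : ℕ → (Ω → ℝ), (∀ n, f n ∈ carrier) →
    (∀ ε : ℝ, 0 < ε → ∃ M : ℕ, ∀ m n : ℕ, M ≤ m → M ≤ n → N (f m - f n) < ε) →
    ∃ g ∈ carrier, Tendsto (fun n => N (f n - g)) atTop (nhds 0)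

namespace RISpace

variable {Ω : Type} [MeasurableSpace Ω] {μ : Measure Ω}

/-- The set of (a.e.) bounded random variables, i.e. `L^∞`. -/
def Linfty (μ : Measure Ω) : Set (Ω → ℝ) := {X | ∃ C : ℝ, ∀ᵐ ω ∂μ, |X ω| ≤ C}

/-- The order continuous part `𝒳_a` of `𝒳`:
members whose norm vanishes along sets of small measure. -/
def oc (S : RISpace μ) : Set (Ω → ℝ) :=
  {X | X ∈ S.carrier ∧ ∀ ε : ℝ, 0 < ε → ∃ δ : ℝ, 0 < δ ∧
    ∀ A : Set Ω, MeasurableSet A → μ A < ENNReal.ofReal δ → S.N (A.indicator X) < ε}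

/-- Distance from `X` to a set `𝒜` in the norm of `𝒳`. -/
noncomputable def distTo (S : RISpace μ) (X : Ω → ℝ) (𝒜 : Set (Ω → ℝ)) : ℝ :=
  sInf ((fun V => S.N (X - V)) '' 𝒜)

/-- The negative part `X⁻ = max (−X, 0)` of a random variable. -/
def negp (X : Ω → ℝ) : Ω → ℝ := fun ω => max (-X ω) 0

/-- The risk measure `ρ(X) = d(X⁻, 𝒳_a) − E[X]` of Example 2.1. -/
noncomputable def rho (S : RISpace μ) (X : Ω → ℝ) : ℝ :=
  S.distTo (negp X) S.oc - ∫ ω, X ω ∂μ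

end RISpace

section Aux

variable {Ω : Type} [MeasurableSpace Ω] {μ : Measure Ω}

private lemma clamp_dist (z v : ℝ) (hz : 0 ≤ z) : |z - min (max v 0) z| ≤ |z - v| := by
  have hm : min (max v 0) z ≤ z := min_le_right _ _
  rw [abs_of_nonneg (by linarith)]
  rcases le_total v z with h | h
  · have hvm : v ≤ min (max v 0) z := le_min (le_max_left _ _) h
    calc z - min (max v 0) z ≤ z - v := by linarith
      _ ≤ |z - v| := le_abs_self _
  · have hmz : min (max v 0) z = z := min_eq_right (le_trans h (le_max_left _ _))
    rw [hmz, sub_self]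
    exact abs_nonneg _

private lemma clamp_abs (z v : ℝ) (hz : 0 ≤ z) : |min (max v 0) z| ≤ |v| := by
  have h0 : 0 ≤ min (max v 0) z := le_min (le_max_right _ _) hz
  rw [abs_of_nonneg h0]
  exact le_trans (min_le_left _ _) (max_le (le_abs_self v) (abs_nonneg v))

private lemma riSub_mem (S : RISpace μ) {X V : Ω → ℝ}
    (hX : X ∈ S.carrier) (hV : V ∈ S.carrier) : X - V ∈ S.carrier := by
  have h := S.add_mem hX (S.smul_mem (-1) hV)
  have e : X + (-1 : ℝ) • V = X - V := by
    funext ω; simp [sub_eq_add_neg]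
  rwa [e] at h

private lemma indicator_solid (S : RISpace μ) {X : Ω → ℝ} (hX : X ∈ S.carrier)
    (A : Set Ω) (hA : MeasurableSet A) : A.indicator X ∈ S.carrier :=
  (S.solid X hX _ ((S.aemeasurable X hX).indicator hA) (ae_of_all _ fun ω => by
    by_cases h : ω ∈ A <;>
      simp [Set.indicator_of_mem, Set.indicator_of_notMem, h, abs_nonneg])).1

private lemma oc_solid (S : RISpace μ) {V W : Ω → ℝ} (hV : V ∈ S.oc)
    (hWm : AEMeasurable W μ) (h : ∀ ω, |W ω| ≤ |V ω|) : W ∈ S.oc := by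
  refine ⟨(S.solid V hV.1 W hWm (ae_of_all _ h)).1, fun ε hε => ?_⟩
  obtain ⟨δ, hδ, hδ'⟩ := hV.2 ε hε
  refine ⟨δ, hδ, fun A hA hAμ => ?_⟩
  have hVA := indicator_solid S hV.1 A hA
  have hle : S.N (A.indicator W) ≤ S.N (A.indicator V) := by
    refine (S.solid _ hVA _ (hWm.indicator hA) (ae_of_all _ fun ω => ?_)).2
    by_cases hω : ω ∈ A <;>
      simp [Set.indicator_of_mem, Set.indicator_of_notMem, hω, h ω]
  exact lt_of_le_of_lt hle (hδ' A hA hAμ)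

private lemma oc_add (S : RISpace μ) {V W : Ω → ℝ} (hV : V ∈ S.oc) (hW : W ∈ S.oc) :
    V + W ∈ S.oc := by
  refine ⟨S.add_mem hV.1 hW.1, fun ε hε => ?_⟩
  obtain ⟨δ₁, hδ₁, h₁⟩ := hV.2 (ε / 2) (by linarith)
  obtain ⟨δ₂, hδ₂, h₂⟩ := hW.2 (ε / 2) (by linarith)
  refine ⟨min δ₁ δ₂, lt_min hδ₁ hδ₂, fun A hA hAμ => ?_⟩
  have e : A.indicator (V + W) = A.indicator V + A.indicator W := by
    funext ω; by_cases h : ω ∈ A <;>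
      simp [Set.indicator_of_mem, Set.indicator_of_notMem, h]
  have htri := S.norm_triangle _ _ (indicator_solid S hV.1 A hA)
    (indicator_solid S hW.1 A hA)
  have hμ₁ : μ A < ENNReal.ofReal δ₁ :=
    lt_of_lt_of_le hAμ (ENNReal.ofReal_le_ofReal (min_le_left _ _))
  have hμ₂ : μ A < ENNReal.ofReal δ₂ :=
    lt_of_lt_of_le hAμ (ENNReal.ofReal_le_ofReal (min_le_right _ _))
  have := h₁ A hA hμ₁
  have := h₂ A hA hμ₂
  rw [e]
  linarith

private lemma zero_oc (S : RISpace μ) : (0 : Ω → ℝ) ∈ S.oc :=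
  ⟨S.zero_mem, fun ε hε => ⟨1, one_pos, fun A _ _ => by
    simpa [Set.indicator_zero', S.norm_zero'] using hε⟩⟩

private lemma distTo_subadd (S : RISpace μ) {Y Z₁ Z₂ : Ω → ℝ}
    (hZ₁ : Z₁ ∈ S.carrier) (hZ₂ : Z₂ ∈ S.carrier) (hYm : AEMeasurable Y μ)
    (hY0 : ∀ ω, 0 ≤ Y ω) (hZ₁0 : ∀ ω, 0 ≤ Z₁ ω) (hZ₂0 : ∀ ω, 0 ≤ Z₂ ω)
    (hle : ∀ ω, Y ω ≤ Z₁ ω + Z₂ ω) :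
    S.distTo Y S.oc ≤ S.distTo Z₁ S.oc + S.distTo Z₂ S.oc := by
  have hZ₁m := S.aemeasurable Z₁ hZ₁
  have hZ₂m := S.aemeasurable Z₂ hZ₂
  have key : ∀ V₁ ∈ S.oc, ∀ V₂ ∈ S.oc,
      S.distTo Y S.oc ≤ S.N (Z₁ - V₁) + S.N (Z₂ - V₂) := by
    intro V₁ hV₁ V₂ hV₂
    have hV₁m := S.aemeasurable V₁ hV₁.1
    have hV₂m := S.aemeasurable V₂ hV₂.1
    set V₁' : Ω → ℝ := fun ω => min (max (V₁ ω) 0) (Z₁ ω) with hV₁'def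
    set V₂' : Ω → ℝ := fun ω => min (max (V₂ ω) 0) (Z₂ ω) with hV₂'def
    have hV₁'m : AEMeasurable V₁' μ := (hV₁m.max aemeasurable_const).min hZ₁m
    have hV₂'m : AEMeasurable V₂' μ := (hV₂m.max aemeasurable_const).min hZ₂m
    have hV₁'oc : V₁' ∈ S.oc :=
      oc_solid S hV₁ hV₁'m (fun ω => clamp_abs _ _ (hZ₁0 ω))
    have hV₂'oc : V₂' ∈ S.oc :=
      oc_solid S hV₂ hV₂'m (fun ω => clamp_abs _ _ (hZ₂0 ω))
    have hV₁'0 : ∀ ω, 0 ≤ V₁' ω := fun ω => le_min (le_max_right _ _) (hZ₁0 ω)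
    have hV₂'0 : ∀ ω, 0 ≤ V₂' ω := fun ω => le_min (le_max_right _ _) (hZ₂0 ω)
    set W : Ω → ℝ := fun ω => min (Y ω) (V₁' ω + V₂' ω) with hWdef
    have hWm : AEMeasurable W μ := hYm.min (hV₁'m.add hV₂'m)
    have hsum_oc : V₁' + V₂' ∈ S.oc := oc_add S hV₁'oc hV₂'oc
    have hWoc : W ∈ S.oc := by
      refine oc_solid S hsum_oc hWm (fun ω => ?_)
      have h0 : 0 ≤ W ω := le_min (hY0 ω) (add_nonneg (hV₁'0 ω) (hV₂'0 ω))
      show |W ω| ≤ |V₁' ω + V₂' ω|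
      rw [abs_of_nonneg h0, abs_of_nonneg (add_nonneg (hV₁'0 ω) (hV₂'0 ω))]
      exact min_le_right _ _
    have hsolid₁ := S.solid _ (riSub_mem S hZ₁ hV₁.1) (Z₁ - V₁') (hZ₁m.sub hV₁'m)
      (ae_of_all _ fun ω => by simpa using clamp_dist (Z₁ ω) (V₁ ω) (hZ₁0 ω))
    have hsolid₂ := S.solid _ (riSub_mem S hZ₂ hV₂.1) (Z₂ - V₂') (hZ₂m.sub hV₂'m)
      (ae_of_all _ fun ω => by simpa using clamp_dist (Z₂ ω) (V₂ ω) (hZ₂0 ω))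
    have hD : (Z₁ - V₁') + (Z₂ - V₂') ∈ S.carrier := S.add_mem hsolid₁.1 hsolid₂.1
    have hYW : S.N (Y - W) ≤ S.N ((Z₁ - V₁') + (Z₂ - V₂')) := by
      refine (S.solid _ hD _ (hYm.sub hWm) (ae_of_all _ fun ω => ?_)).2
      have h1 : V₁' ω ≤ Z₁ ω := min_le_right _ _
      have h2 : V₂' ω ≤ Z₂ ω := min_le_right _ _
      have hWle : W ω ≤ Y ω := min_le_left _ _
      have hD0 : 0 ≤ (Z₁ ω - V₁' ω) + (Z₂ ω - V₂' ω) := by linarith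
      show |Y ω - W ω| ≤ |(Z₁ ω - V₁' ω) + (Z₂ ω - V₂' ω)|
      rw [abs_of_nonneg (by linarith), abs_of_nonneg hD0]
      rcases le_total (Y ω) (V₁' ω + V₂' ω) with h | h
      · have hW : W ω = Y ω := min_eq_left h
        rw [hW]; linarith
      · have hW : W ω = V₁' ω + V₂' ω := min_eq_right h
        rw [hW]; linarith [hle ω]
    have htri := S.norm_triangle _ _ hsolid₁.1 hsolid₂.1
    have hfinal : S.N (Y - W) ≤ S.N (Z₁ - V₁) + S.N (Z₂ - V₂) :=
      le_trans hYW (le_trans htri (add_le_add hsolid₁.2 hsolid₂.2))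
    have hbb : BddBelow ((fun V => S.N (Y - V)) '' S.oc) := by
      refine ⟨0, ?_⟩
      rintro x ⟨V, -, rfl⟩
      exact S.norm_nonneg' _
    have hmem : S.N (Y - W) ∈ (fun V => S.N (Y - V)) '' S.oc := ⟨W, hWoc, rfl⟩
    exact le_trans (csInf_le hbb hmem) hfinal
  have hne₁ : ((fun V => S.N (Z₁ - V)) '' S.oc).Nonempty :=
    ⟨_, Set.mem_image_of_mem _ (zero_oc S)⟩
  have hne₂ : ((fun V => S.N (Z₂ - V)) '' S.oc).Nonempty :=
    ⟨_, Set.mem_image_of_mem _ (zero_oc S)⟩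
  have e₁ : S.distTo Z₁ S.oc = sInf ((fun V => S.N (Z₁ - V)) '' S.oc) := rfl
  have e₂ : S.distTo Z₂ S.oc = sInf ((fun V => S.N (Z₂ - V)) '' S.oc) := rfl
  rw [e₁, e₂, ← sub_le_iff_le_add]
  refine le_csInf hne₁ ?_
  rintro b ⟨V₁, hV₁, rfl⟩
  rw [sub_le_iff_le_add, add_comm, ← sub_le_iff_le_add]
  refine le_csInf hne₂ ?_
  rintro c ⟨V₂, hV₂, rfl⟩
  rw [sub_le_iff_le_add, add_comm]
  exact key V₁ hV₁ V₂ hV₂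

end Aux


/-- `ρ(X) = d(X⁻, 𝒳_a) − E[X]` is subadditive on an r.i. space `𝒳 ≠ L^∞`
over a non-atomic probability space. -/
theorem rho_subadditive {Ω : Type} [MeasurableSpace Ω] (μ : Measure Ω)
    [IsProbabilityMeasure μ] [NullSingletonClass μ]
    (S : RISpace μ) (hne : S.carrier ≠ RISpace.Linfty μ) :
    ∀ X₁ ∈ S.carrier, ∀ X₂ ∈ S.carrier, S.rho (X₁ + X₂) ≤ S.rho X₁ + S.rho X₂ := by
  intro X₁ h₁ X₂ h₂
  have hX₁m := S.aemeasurable X₁ h₁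
  have hX₂m := S.aemeasurable X₂ h₂
  have hZ₁ : RISpace.negp X₁ ∈ S.carrier := by
    refine (S.solid X₁ h₁ _ (hX₁m.neg.max aemeasurable_const)
      (ae_of_all _ fun ω => ?_)).1
    show |max (-X₁ ω) 0| ≤ |X₁ ω|
    rw [abs_of_nonneg (le_max_right _ _)]
    exact max_le (neg_le_abs _) (abs_nonneg _)
  have hZ₂ : RISpace.negp X₂ ∈ S.carrier := by
    refine (S.solid X₂ h₂ _ (hX₂m.neg.max aemeasurable_const)
      (ae_of_all _ fun ω => ?_)).1
    show |max (-X₂ ω) 0| ≤ |X₂ ω|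
    rw [abs_of_nonneg (le_max_right _ _)]
    exact max_le (neg_le_abs _) (abs_nonneg _)
  have hYm : AEMeasurable (RISpace.negp (X₁ + X₂)) μ :=
    (hX₁m.add hX₂m).neg.max aemeasurable_const
  have hle : ∀ ω, RISpace.negp (X₁ + X₂) ω ≤ RISpace.negp X₁ ω + RISpace.negp X₂ ω := by
    intro ω
    show max (-(X₁ ω + X₂ ω)) 0 ≤ max (-X₁ ω) 0 + max (-X₂ ω) 0
    exact max_le (by linarith [le_max_left (-X₁ ω) (0:ℝ), le_max_left (-X₂ ω) (0:ℝ)])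
      (add_nonneg (le_max_right _ _) (le_max_right _ _))
  have hdist := distTo_subadd S hZ₁ hZ₂ hYm
    (fun ω => le_max_right _ _) (fun ω => le_max_right _ _) (fun ω => le_max_right _ _) hle
  have hint : ∫ ω, (X₁ + X₂) ω ∂μ = ∫ ω, X₁ ω ∂μ + ∫ ω, X₂ ω ∂μ := by
    simp only [Pi.add_apply]
    exact integral_add (S.integrable' X₁ h₁) (S.integrable' X₂ h₂)
  simp only [RISpace.rho]
  rw [hint]
  linarith
end

section
/- Let 𝒴 be a vector space and 𝒴^# a vector space of linear functionals separating points of 𝒴. If ρ : 𝒴 → ℝ is convex and σ(𝒴, 𝒴^#) lower semicontinuous at Y₀ ∈ 𝒴, then the biconjugate satisfies ρ**(Y₀) = ρ(Y₀), where ρ*(F) = sup_{Y}(F(Y) − ρ(Y)) and ρ**(Y) = sup_{F ∈ 𝒴^#}(F(Y) − ρ*(F)). -/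
open Filter Set

open Topology in
lemma mem_of_weak_continuous {𝒴 : Type*} [AddCommGroup 𝒴] [Module ℝ 𝒴]
    (D : Submodule ℝ (𝒴 →ₗ[ℝ] ℝ)) (g : 𝒴 →ₗ[ℝ] ℝ)
    (hg : Continuous fun x : WeakBilin D.subtype.flip => g x) : g ∈ D := by
  set B := D.subtype.flip with hB
  have h1 : {x : WeakBilin B | |g x| < 1} ∈ 𝓝 (0 : WeakBilin B) := by
    have := (isOpen_Iio (a := (1:ℝ))).preimage hg.abs
    exact this.mem_nhds (by change |g (0:𝒴)| < 1; simp)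
  obtain ⟨U, hU, hUsub⟩ := (LinearMap.hasBasis_weakBilin (F := ↥D) B).mem_iff.1 h1
  obtain ⟨s, r, hr, rfl⟩ := (SeminormFamily.basisSets_iff _).1 hU
  have hker : ⨅ i : ↥s, LinearMap.ker ((i : ↥D) : 𝒴 →ₗ[ℝ] ℝ) ≤ LinearMap.ker g := by
    intro y hy
    rw [Submodule.mem_iInf] at hy
    have hy' : ∀ (t : ℝ), |g (t • y)| < 1 := by
      intro t
      apply hUsub
      simp only [id_eq, Seminorm.mem_ball_zero]
      apply Seminorm.finset_sup_apply_lt hr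
      intro i hi
      have h0 : (i : 𝒴 →ₗ[ℝ] ℝ) y = 0 := hy ⟨i, hi⟩
      rw [sub_zero]
      show ‖(B (t • y)) i‖ < r
      have he : (B (t • y)) i = (i : 𝒴 →ₗ[ℝ] ℝ) (t • y) := rfl
      rw [he, map_smul, smul_eq_mul, h0, mul_zero, norm_zero]
      exact hr
    rw [LinearMap.mem_ker]
    by_contra hne
    have := hy' (2 / g y)
    rw [map_smul, smul_eq_mul, div_mul_cancel₀ _ hne] at this
    norm_num at this
  have hspan : g ∈ Submodule.span ℝ (Set.range fun i : ↥s => ((i : ↥D) : 𝒴 →ₗ[ℝ] ℝ)) :=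
    mem_span_of_iInf_ker_le_ker hker
  refine Submodule.span_le.2 ?_ hspan
  rintro _ ⟨i, rfl⟩
  exact (i : ↥D).2

lemma arith_key (c lam u c₁ gY gY₀ rY : ℝ) (hc₁pos : 0 < c₁)
    (h1 : u ≤ gY + rY * c₁) (h2 : gY₀ + lam * c₁ ≤ u) (hclam : c < lam) :
    c + (-c₁⁻¹ * gY - rY) ≤ -c₁⁻¹ * gY₀ := by
  have hd : (0:ℝ) < c₁⁻¹ := inv_pos.2 hc₁pos
  have hdc : c₁ * c₁⁻¹ = 1 := mul_inv_cancel₀ (ne_of_gt hc₁pos)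
  have h3 : c * c₁ + gY₀ ≤ gY + rY * c₁ := by nlinarith [h1, h2, hclam, mul_pos hc₁pos hd]
  have h5 := mul_le_mul_of_nonneg_right h3 hd.le
  have h4 : c + gY₀ * c₁⁻¹ ≤ gY * c₁⁻¹ + rY := by
    calc c + gY₀ * c₁⁻¹ = (c * c₁ + gY₀) * c₁⁻¹ + c * (1 - c₁ * c₁⁻¹) := by ring
    _ = (c * c₁ + gY₀) * c₁⁻¹ := by rw [hdc]; ring
    _ ≤ (gY + rY * c₁) * c₁⁻¹ := h5
    _ = gY * c₁⁻¹ + rY * (c₁ * c₁⁻¹) := by ring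
    _ = gY * c₁⁻¹ + rY := by rw [hdc]; ring
  linarith

open Topology in
lemma aux_key {𝒴 : Type*} [AddCommGroup 𝒴] [Module ℝ 𝒴]
    (D : Submodule ℝ (𝒴 →ₗ[ℝ] ℝ))
    (ρ : 𝒴 → ℝ) (hconv : ConvexOn ℝ Set.univ ρ) (Y₀ : 𝒴)
    (hlsc : LowerSemicontinuousAt (fun y : WeakBilin D.subtype.flip => ρ y) Y₀)
    (c : ℝ) (hc : c < ρ Y₀) :
    ∃ F ∈ D, ∀ Y : 𝒴, c + (F Y - ρ Y) ≤ F Y₀ := by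
  set B := D.subtype.flip with hB
  let Y₀' : WeakBilin B := Y₀
  set lam : ℝ := (c + ρ Y₀) / 2 with hlam
  have hclam : c < lam := by rw [hlam]; linarith
  have hlamrho : lam < ρ Y₀ := by rw [hlam]; linarith
  -- convex open nbhd V with ρ > lam on V
  have hnhds : {y : WeakBilin B | lam < ρ y} ∈ 𝓝 Y₀' := hlsc lam hlamrho
  haveI : LocallyConvexSpace ℝ (WeakBilin B) :=
    (LinearMap.weakBilin_withSeminorms (F := ↥D) B).toLocallyConvexSpace
  haveI : IsTopologicalAddGroup (WeakBilin B) := WeakBilin.instIsTopologicalAddGroup (F := ↥D) B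
  haveI : ContinuousSMul ℝ (WeakBilin B) := WeakBilin.instContinuousSMul (F := ↥D) B
  obtain ⟨W, ⟨hWn, hWc⟩, hWsub⟩ :=
    (LocallyConvexSpace.convex_basis (𝕜 := ℝ) Y₀').mem_iff.1 hnhds
  set V : Set (WeakBilin B) := interior W with hV
  have hVopen : IsOpen V := isOpen_interior
  have hVconv : Convex ℝ V := hWc.interior
  have hY₀V : Y₀' ∈ V := mem_interior_iff_mem_nhds.2 hWn
  have hVsub : ∀ y ∈ V, lam < ρ y := fun y hy => hWsub (interior_subset hy)
  -- separation
  set s : Set (WeakBilin B × ℝ) := V ×ˢ Iio lam with hs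
  set t : Set (WeakBilin B × ℝ) := {p | ρ p.1 ≤ p.2} with ht
  have hsconv : Convex ℝ s := hVconv.prod (convex_Iio lam)
  have hsopen : IsOpen s := hVopen.prod isOpen_Iio
  have htconv : Convex ℝ t := by
    have := hconv.convex_epigraph
    simp only [Set.mem_univ, true_and] at this
    exact this
  have hdisj : Disjoint s t := by
    rw [Set.disjoint_left]
    rintro ⟨y, a⟩ ⟨hy, ha⟩ hmem
    have h1 : lam < ρ y := hVsub y hy
    have h2 : ρ y ≤ a := hmem
    have h3 : a < lam := ha
    linarith
  obtain ⟨f, u, hfs, hft⟩ := geometric_hahn_banach_open hsconv hsopen htconv hdisj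
  have hdec : ∀ (y : WeakBilin B) (a : ℝ), f (y, a) = f (y, 0) + a * f (0, 1) := by
    intro y a
    have : ((y, a) : WeakBilin B × ℝ) = (y, (0:ℝ)) + a • ((0 : WeakBilin B), (1:ℝ)) := by
      simp [Prod.ext_iff]
    rw [this, map_add, map_smul, smul_eq_mul]
  set c₁ : ℝ := f (0, 1) with hc₁
  clear_value c₁
  -- c₁ > 0
  have hY₀s : ∀ a : ℝ, a < lam → f (Y₀, 0) + a * c₁ < u := by
    intro a halam
    have : ((Y₀', a) : WeakBilin B × ℝ) ∈ s := ⟨hY₀V, halam⟩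
    have := hfs _ this
    rwa [hdec] at this
  have hepi : ∀ y : WeakBilin B, u ≤ f (y, 0) + ρ y * c₁ := by
    intro y
    have : ((y, ρ y) : WeakBilin B × ℝ) ∈ t := by simp [ht]
    have := hft _ this
    rwa [hdec] at this
  have hc₁pos : 0 < c₁ := by
    rcases lt_trichotomy c₁ 0 with h | h | h
    · exfalso
      set a : ℝ := min c ((u - f (Y₀, 0)) / c₁) with ha
      have h1 : a < lam := lt_of_le_of_lt (min_le_left _ _) hclam
      have h2 := hY₀s a h1
      have h3 : a ≤ (u - f (Y₀, 0)) / c₁ := min_le_right _ _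
      have h4 : (u - f (Y₀, 0)) ≤ a * c₁ := by
        rwa [le_div_iff_of_neg h] at h3
      linarith
    · exfalso
      have h1 := hY₀s c hclam
      have h2 := hepi Y₀
      rw [h] at h1 h2
      simp at h1 h2
      linarith
    · exact h
  -- the linear functional
  obtain ⟨g, hgval⟩ : ∃ g : 𝒴 →ₗ[ℝ] ℝ, ∀ y : 𝒴, g y = f (y, 0) :=
    ⟨(f.toLinearMap.comp (LinearMap.inl ℝ (WeakBilin B) ℝ) :), fun y => rfl⟩
  have hgcont : Continuous fun x : WeakBilin B => g x := by
    have : Continuous fun y : WeakBilin B => ((y, (0:ℝ)) : WeakBilin B × ℝ) :=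
      continuous_id.prodMk continuous_const
    have : Continuous fun y : WeakBilin B => f (y, (0:ℝ)) := f.continuous.comp this
    exact this.congr fun y => (hgval y).symm
  have hgD : g ∈ D := mem_of_weak_continuous D g hgcont
  refine ⟨(-c₁⁻¹) • g, D.smul_mem _ hgD, ?_⟩
  intro Y
  have h1 : u ≤ g Y + ρ Y * c₁ := by rw [hgval]; exact hepi Y
  have h2 : g Y₀ + lam * c₁ ≤ u := by
    by_contra hcon
    push_neg at hcon
    set a : ℝ := (u - g Y₀) / c₁ with ha
    have h3 : a < lam := by
      rw [ha, div_lt_iff₀ hc₁pos]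
      linarith
    have h4 := hY₀s a h3
    rw [← hgval] at h4
    have h5 : a * c₁ = u - g Y₀ := by
      rw [ha, div_mul_cancel₀ _ (ne_of_gt hc₁pos)]
    rw [h5] at h4
    simp at h4
  have hFY : ∀ z : 𝒴, ((-c₁⁻¹) • g) z = -c₁⁻¹ * g z := by
    intro z
    simp [LinearMap.smul_apply, smul_eq_mul]
  rw [hFY Y, hFY Y₀]
  exact arith_key c lam u c₁ (g Y) (g Y₀) (ρ Y) hc₁pos h1 h2 hclam


/-- Proposition 4.5 (local Fenchel–Moreau): let `𝒴` be a vector space and `D` a point-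
separating space of linear functionals on `𝒴`. If `ρ : 𝒴 → ℝ` is convex and lower
semicontinuous at `Y₀` for the weak topology `σ(𝒴, D)`, then
`ρ**(Y₀) = ρ(Y₀)`, where `ρ*(F) = sup_Y (F(Y) − ρ(Y))` and
`ρ**(Y) = sup_{F ∈ D} (F(Y) − ρ*(F))` (computed in the extended reals). -/
theorem biconjugate_eq_at_point {𝒴 : Type*} [AddCommGroup 𝒴] [Module ℝ 𝒴]
    (D : Submodule ℝ (𝒴 →ₗ[ℝ] ℝ))
    (hsep : ∀ y : 𝒴, y ≠ 0 → ∃ F ∈ D, F y ≠ 0)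
    (ρ : 𝒴 → ℝ) (hconv : ConvexOn ℝ Set.univ ρ) (Y₀ : 𝒴)
    (hlsc : @LowerSemicontinuousAt 𝒴 ℝ
      (TopologicalSpace.induced (fun y (F : D) => (F : 𝒴 →ₗ[ℝ] ℝ) y)
        Pi.topologicalSpace) _ ρ Y₀) :
    (⨆ F : D, (((F : 𝒴 →ₗ[ℝ] ℝ) Y₀ : ℝ) : EReal)
        - ⨆ Y : 𝒴, (((F : 𝒴 →ₗ[ℝ] ℝ) Y - ρ Y : ℝ) : EReal))
      = (ρ Y₀ : EReal) := by
  have hlsc' : LowerSemicontinuousAt (fun y : WeakBilin D.subtype.flip => ρ y) Y₀ := hlsc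
  refine le_antisymm ?_ ?_
  · refine iSup_le fun F => ?_
    have hS : (((F : 𝒴 →ₗ[ℝ] ℝ) Y₀ - ρ Y₀ : ℝ) : EReal)
        ≤ ⨆ Y : 𝒴, (((F : 𝒴 →ₗ[ℝ] ℝ) Y - ρ Y : ℝ) : EReal) :=
      le_iSup (fun Y : 𝒴 => (((F : 𝒴 →ₗ[ℝ] ℝ) Y - ρ Y : ℝ) : EReal)) Y₀
    calc (((F : 𝒴 →ₗ[ℝ] ℝ) Y₀ : ℝ) : EReal)
            - ⨆ Y : 𝒴, (((F : 𝒴 →ₗ[ℝ] ℝ) Y - ρ Y : ℝ) : EReal)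
        ≤ (((F : 𝒴 →ₗ[ℝ] ℝ) Y₀ : ℝ) : EReal) - (((F : 𝒴 →ₗ[ℝ] ℝ) Y₀ - ρ Y₀ : ℝ) : EReal) :=
          EReal.sub_le_sub le_rfl hS
      _ = (((F : 𝒴 →ₗ[ℝ] ℝ) Y₀ - ((F : 𝒴 →ₗ[ℝ] ℝ) Y₀ - ρ Y₀) : ℝ) : EReal) := by
          rw [← EReal.coe_sub]
      _ = (ρ Y₀ : EReal) := by norm_num
  · by_contra hcon
    push_neg at hcon
    obtain ⟨c, hc1, hc2⟩ := EReal.exists_between_coe_real hcon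
    have hcρ : c < ρ Y₀ := by exact_mod_cast hc2
    obtain ⟨F, hFD, hF⟩ := aux_key D ρ hconv Y₀ hlsc' c hcρ
    have hS : (⨆ Y : 𝒴, ((F Y - ρ Y : ℝ) : EReal)) ≤ ((F Y₀ - c : ℝ) : EReal) :=
      iSup_le fun Y => by exact_mod_cast (by linarith [hF Y] : F Y - ρ Y ≤ F Y₀ - c)
    have hle : (c : EReal)
        ≤ ⨆ G : D, (((G : 𝒴 →ₗ[ℝ] ℝ) Y₀ : ℝ) : EReal)
            - ⨆ Y : 𝒴, (((G : 𝒴 →ₗ[ℝ] ℝ) Y - ρ Y : ℝ) : EReal) := by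
      calc (c : EReal) = ((F Y₀ : ℝ) : EReal) - ((F Y₀ - c : ℝ) : EReal) := by
            rw [← EReal.coe_sub]; norm_num
        _ ≤ ((F Y₀ : ℝ) : EReal) - ⨆ Y : 𝒴, ((F Y - ρ Y : ℝ) : EReal) :=
            EReal.sub_le_sub le_rfl hS
        _ ≤ _ := le_iSup (fun G : D => (((G : 𝒴 →ₗ[ℝ] ℝ) Y₀ : ℝ) : EReal)
              - ⨆ Y : 𝒴, (((G : 𝒴 →ₗ[ℝ] ℝ) Y - ρ Y : ℝ) : EReal)) (⟨F, hFD⟩ : D)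
    exact absurd (lt_of_le_of_lt hle hc1) (lt_irrefl _)
end

section
/- Let 𝒳 be a rearrangement-invariant space over a probability space, ρ : 𝒳 → (−∞, ∞] a decreasing functional and X ∈ 𝒳. Then ρ has the Fatou property at X if and only if: for every Y ∈ 𝒳 with Y ≥ X, every sequence of reals c_n ↓ 0, and every sequence of measurable sets A_n ↓ ∅, setting Y_n = (X + c_n·1)·1_{A_n^c} + Y·1_{A_n}, one has ρ(X) = lim_n ρ(Y_n). -/
open MeasureTheory Filter Set

section Aux

variable {Ω : Type} [MeasurableSpace Ω] {μ : Measure Ω}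

lemma RISpace.abs_mem (S : RISpace μ) {X : Ω → ℝ} (hX : X ∈ S.carrier) :
    (fun ω => |X ω|) ∈ S.carrier :=
  (S.solid X hX _ (continuous_abs.measurable.comp_aemeasurable (S.aemeasurable X hX))
    (Filter.Eventually.of_forall fun ω => by simp)).1

lemma RISpace.dom_mem (S : RISpace μ) {X Y : Ω → ℝ} (hX : X ∈ S.carrier)
    (hY : Y ∈ S.carrier) (r : ℝ) :
    (fun ω => |X ω| + (|r| + |Y ω|)) ∈ S.carrier :=
  S.add_mem (S.abs_mem hX) (S.add_mem (S.const_mem |r|) (S.abs_mem hY))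

lemma RISpace.combo_mem (S : RISpace μ) {X Y : Ω → ℝ} (hX : X ∈ S.carrier)
    (hY : Y ∈ S.carrier) {A : Set Ω} (hA : MeasurableSet A) (r : ℝ) :
    (Aᶜ.indicator (fun ω => X ω + r) + A.indicator Y) ∈ S.carrier := by
  have hXa := S.aemeasurable X hX
  have hYa := S.aemeasurable Y hY
  refine (S.solid _ (S.dom_mem hX hY r) _ ?_ (Filter.Eventually.of_forall fun ω => ?_)).1
  · exact ((hXa.add aemeasurable_const).indicator hA.compl).add (hYa.indicator hA)
  · have habs : |(|X ω| + (|r| + |Y ω|))| = |X ω| + (|r| + |Y ω|) :=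
      abs_of_nonneg (by positivity)
    rw [Pi.add_apply, habs]
    by_cases hω : ω ∈ A
    · rw [Set.indicator_of_notMem (Set.notMem_compl_iff.2 hω), Set.indicator_of_mem hω,
        zero_add]
      have h1 := abs_nonneg (X ω); have h2 := abs_nonneg r
      linarith
    · rw [Set.indicator_of_mem (Set.mem_compl hω), Set.indicator_of_notMem hω, add_zero]
      calc |X ω + r| ≤ |X ω| + |r| := abs_add_le _ _
        _ ≤ _ := by linarith [abs_nonneg (Y ω)]

end Aux

/-- Lemma 3.1: for a decreasing functional `ρ : 𝒳 → (−∞,∞]` on an r.i. space over a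
probability space and `X ∈ 𝒳`, the Fatou property at `X` is equivalent to:
for every `Y ∈ 𝒳` with `Y ≥ X`, every `c_n ↓ 0` and every `A_n ↓ ∅`, with
`Y_n = (X + c_n·1)·1_{A_nᶜ} + Y·1_{A_n}`, one has `ρ(X) = lim_n ρ(Y_n)`. -/
theorem fatou_iff_special_sequences {Ω : Type} [MeasurableSpace Ω] (μ : Measure Ω)
    [IsProbabilityMeasure μ]
    (S : RISpace μ) (ρ : (Ω → ℝ) → EReal)
    (hproper : ∀ X ∈ S.carrier, ρ X ≠ ⊥)
    (hdec : ∀ X₁ ∈ S.carrier, ∀ X₂ ∈ S.carrier, (∀ᵐ ω ∂μ, X₂ ω ≤ X₁ ω) → ρ X₁ ≤ ρ X₂)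
    (X : Ω → ℝ) (hX : X ∈ S.carrier) :
    -- Fatou property at X
    ((∀ Xseq : ℕ → Ω → ℝ, (∀ n, Xseq n ∈ S.carrier) →
        (∀ᵐ ω ∂μ, Tendsto (fun n => Xseq n ω) atTop (nhds (X ω))) →
        (∃ X₀ ∈ S.carrier, ∀ n, ∀ᵐ ω ∂μ, |Xseq n ω| ≤ X₀ ω) →
        ρ X ≤ Filter.liminf (fun n => ρ (Xseq n)) atTop)
      ↔
    -- the special-sequence criterion
      (∀ Y ∈ S.carrier, (∀ᵐ ω ∂μ, X ω ≤ Y ω) →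
        ∀ c : ℕ → ℝ, Antitone c → Tendsto c atTop (nhds 0) →
        ∀ A : ℕ → Set Ω, (∀ n, MeasurableSet (A n)) → Antitone A → (⋂ n, A n) = ∅ →
        Tendsto
          (fun n => ρ ((A n)ᶜ.indicator (fun ω => X ω + c n) + (A n).indicator Y))
          atTop (nhds (ρ X)))) := by
  constructor
  · -- Fatou ⇒ special sequences
    intro hF Y hY hXY c hcanti hc0 A hA hAanti hAempty
    have hc_nonneg : ∀ n, 0 ≤ c n := fun n =>
      le_of_tendsto hc0 (eventually_atTop.2 ⟨n, fun m hm => hcanti hm⟩)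
    set Yn : ℕ → Ω → ℝ :=
      fun n => (A n)ᶜ.indicator (fun ω => X ω + c n) + (A n).indicator Y with hYndef
    have hYnmem : ∀ n, Yn n ∈ S.carrier := fun n => S.combo_mem hX hY (hA n) (c n)
    have hle : ∀ n, ∀ᵐ ω ∂μ, X ω ≤ Yn n ω := by
      intro n
      filter_upwards [hXY] with ω hω
      by_cases h : ω ∈ A n
      · simpa [Yn, Set.indicator_of_mem h,
          Set.indicator_of_notMem (Set.notMem_compl_iff.2 h)] using hω
      · have := hc_nonneg n
        simp only [Yn, Pi.add_apply, Set.indicator_of_notMem h,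
          Set.indicator_of_mem (Set.mem_compl h), add_zero]
        linarith
    have hub : ∀ n, ρ (Yn n) ≤ ρ X := fun n => hdec _ (hYnmem n) _ hX (hle n)
    have hlim : ρ X ≤ liminf (fun n => ρ (Yn n)) atTop := by
      apply hF Yn hYnmem
      · refine Filter.Eventually.of_forall fun ω => ?_
        obtain ⟨m, hm⟩ : ∃ m, ω ∉ A m := by
          by_contra h
          push_neg at h
          have : ω ∈ ⋂ n, A n := Set.mem_iInter.2 h
          simp [hAempty] at this
        have htc : Tendsto (fun n => X ω + c n) atTop (nhds (X ω)) := by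
          simpa using tendsto_const_nhds.add hc0
        refine htc.congr' (eventually_atTop.2 ⟨m, fun n hn => ?_⟩)
        have hnot : ω ∉ A n := fun hc' => hm (hAanti hn hc')
        simp [Yn, Set.indicator_of_notMem hnot, Set.indicator_of_mem (Set.mem_compl hnot)]
      · refine ⟨fun ω => |X ω| + (|c 0| + |Y ω|), S.dom_mem hX hY (c 0),
          fun n => Filter.Eventually.of_forall fun ω => ?_⟩
        by_cases h : ω ∈ A n
        · simp only [Yn, Pi.add_apply, Set.indicator_of_mem h,
            Set.indicator_of_notMem (Set.notMem_compl_iff.2 h), zero_add]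
          linarith [abs_nonneg (X ω), abs_nonneg (c 0), le_abs_self (Y ω)]
        · simp only [Yn, Pi.add_apply, Set.indicator_of_notMem h,
            Set.indicator_of_mem (Set.mem_compl h), add_zero]
          have h1 : c n ≤ |c 0| := le_trans (hcanti (Nat.zero_le n)) (le_abs_self _)
          calc |X ω + c n| ≤ |X ω| + |c n| := abs_add_le _ _
            _ ≤ |X ω| + (|c 0| + |Y ω|) := by
                rw [abs_of_nonneg (hc_nonneg n)]
                linarith [abs_nonneg (Y ω)]
    have hlimsup : limsup (fun n => ρ (Yn n)) atTop ≤ ρ X :=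
      limsup_le_of_le (by isBoundedDefault) (Filter.Eventually.of_forall hub)
    exact tendsto_of_le_liminf_of_limsup_le hlim hlimsup
  · -- special sequences ⇒ Fatou
    intro hcrit Xseq hmem htend hbdd
    obtain ⟨X₀, hX₀, hdom⟩ := hbdd
    have hXa := S.aemeasurable X hX
    have hfa : ∀ n, AEMeasurable (Xseq n) μ := fun n => S.aemeasurable _ (hmem n)
    set f : ℕ → Ω → ℝ := fun n => (hfa n).mk _ with hfdef
    set g : Ω → ℝ := hXa.mk _ with hgdef
    have hfm : ∀ n, StronglyMeasurable (f n) := fun n =>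
      ((hfa n).measurable_mk).stronglyMeasurable
    have hgm : StronglyMeasurable g := hXa.measurable_mk.stronglyMeasurable
    have hfg : ∀ᵐ ω ∂μ, Tendsto (fun n => f n ω) atTop (nhds (g ω)) := by
      have h1 : ∀ᵐ ω ∂μ, ∀ n, Xseq n ω = f n ω := ae_all_iff.2 fun n => (hfa n).ae_eq_mk
      filter_upwards [htend, h1, hXa.ae_eq_mk] with ω e1 e2 e3
      have e3' : X ω = g ω := e3
      rw [← e3']
      exact e1.congr e2
    have hEg : ∀ j : ℕ, ∃ t, MeasurableSet t ∧ μ t ≤ ENNReal.ofReal ((1/2 : ℝ)^j) ∧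
        TendstoUniformlyOn f g atTop tᶜ := fun j =>
      MeasureTheory.tendstoUniformlyOn_of_ae_tendsto' hfm hgm hfg (by positivity)
    choose t htm htμ htu using hEg
    set B : ℕ → Set Ω := fun j => ⋃ i, ⋃ (_ : j ≤ i), t i with hBdef
    have hBanti : Antitone B := fun j k hjk =>
      Set.iUnion₂_subset fun i hi => Set.subset_iUnion₂ (s := fun i' (_ : j ≤ i') => t i') i (hjk.trans hi)
    have hBm : ∀ j, MeasurableSet (B j) := fun j =>
      MeasurableSet.iUnion fun i => MeasurableSet.iUnion fun _ => htm i
    set Z : Set Ω := ⋂ j, B j with hZdef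
    have hZm : MeasurableSet Z := MeasurableSet.iInter hBm
    have hZ0 : μ Z = 0 := by
      have h1 : (∑' i, μ (t i)) ≠ ⊤ := by
        refine ne_top_of_le_ne_top ?_ (ENNReal.tsum_le_tsum htμ)
        have heq : ∀ i : ℕ, ENNReal.ofReal ((1/2 : ℝ)^i) = ENNReal.ofReal (1/2) ^ i :=
          fun i => ENNReal.ofReal_pow (by norm_num) i
        rw [tsum_congr heq, ENNReal.tsum_geometric]
        refine ENNReal.inv_ne_top.2 ?_
        intro h0
        have h2 : ENNReal.ofReal (1/2) < 1 := ENNReal.ofReal_lt_one.2 (by norm_num)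
        have := tsub_eq_zero_iff_le.1 h0
        exact absurd this (not_le.2 h2)
      have h2 : Z = Filter.limsup t atTop := by
        rw [Filter.limsup_eq_iInf_iSup_of_nat]; rfl
      rw [h2]
      exact MeasureTheory.measure_limsup_atTop_eq_zero h1
    set A : ℕ → Set Ω := fun j => B j \ Z with hAdef
    have hAm : ∀ j, MeasurableSet (A j) := fun j => (hBm j).diff hZm
    have hAanti : Antitone A := fun j k h => Set.diff_subset_diff_left (hBanti h)
    have hAempty : (⋂ j, A j) = ∅ := by
      refine Set.eq_empty_iff_forall_notMem.2 fun ω hω => ?_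
      have h1 : ω ∈ Z := Set.mem_iInter.2 fun j => (Set.mem_iInter.1 hω j).1
      exact (Set.mem_iInter.1 hω 0).2 h1
    set c : ℕ → ℝ := fun j => 1/(j+1 : ℝ) with hcdef
    have hcpos : ∀ j, 0 < c j := fun j => by positivity
    have hcanti : Antitone c := by
      intro j k h
      have : (j : ℝ) + 1 ≤ (k : ℝ) + 1 := by exact_mod_cast Nat.succ_le_succ h
      exact one_div_le_one_div_of_le (by positivity) this
    have hc0 : Tendsto c atTop (nhds 0) := tendsto_one_div_add_atTop_nhds_zero_nat
    set Y : Ω → ℝ := fun ω => |X ω| + X₀ ω with hYdef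
    have hYmem : Y ∈ S.carrier := S.add_mem (S.abs_mem hX) hX₀
    have hX₀nn : ∀ᵐ ω ∂μ, 0 ≤ X₀ ω :=
      (hdom 0).mono fun ω h => le_trans (abs_nonneg _) h
    have hXY : ∀ᵐ ω ∂μ, X ω ≤ Y ω := by
      filter_upwards [hX₀nn] with ω h
      have := le_abs_self (X ω)
      simp only [Y]
      linarith
    set Yj : ℕ → Ω → ℝ :=
      fun j => (A j)ᶜ.indicator (fun ω => X ω + c j) + (A j).indicator Y with hYjdef
    have hYjmem : ∀ j, Yj j ∈ S.carrier := fun j => S.combo_mem hX hYmem (hAm j) (c j)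
    have hZae : ∀ᵐ ω ∂μ, ω ∉ Z := by
      rw [← MeasureTheory.measure_eq_zero_iff_ae_notMem] at *
      exact hZ0
    have hkey : ∀ j, ρ (Yj j) ≤ liminf (fun n => ρ (Xseq n)) atTop := by
      intro j
      obtain ⟨N, hN⟩ : ∃ N, ∀ n ≥ N, ∀ ω ∈ (t j)ᶜ, dist (g ω) (f n ω) < c j :=
        eventually_atTop.1 ((Metric.tendstoUniformlyOn_iff.1 (htu j)) (c j) (hcpos j))
      refine Filter.le_liminf_of_le (by isBoundedDefault) ?_
      refine eventually_atTop.2 ⟨N, fun n hn => ?_⟩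
      refine hdec _ (hYjmem j) _ (hmem n) ?_
      filter_upwards [(hfa n).ae_eq_mk, hXa.ae_eq_mk, hdom n, hZae] with ω e1 e2 e3 e5
      by_cases hω : ω ∈ A j
      · have h1 : ω ∉ (A j)ᶜ := Set.notMem_compl_iff.2 hω
        simp only [Yj, Pi.add_apply, Set.indicator_of_mem hω, Set.indicator_of_notMem h1,
          zero_add]
        calc Xseq n ω ≤ |Xseq n ω| := le_abs_self _
          _ ≤ X₀ ω := e3
          _ ≤ |X ω| + X₀ ω := by linarith [abs_nonneg (X ω)]
      · have h2 : ω ∉ t j := by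
          intro hc'
          exact hω ⟨Set.mem_iUnion₂.2 ⟨j, le_refl j, hc'⟩, e5⟩
        have h3 := hN n hn ω h2
        rw [Real.dist_eq] at h3
        have h4 : Xseq n ω ≤ X ω + c j := by
          rw [e1, e2]
          have := abs_lt.1 h3
          linarith [this.1]
        simp only [Yj, Pi.add_apply, Set.indicator_of_notMem hω,
          Set.indicator_of_mem (Set.mem_compl hω), add_zero]
        exact h4
      -- done
    have hT := hcrit Y hYmem hXY c hcanti hc0 A hAm hAanti hAempty
    exact le_of_tendsto hT (Filter.Eventually.of_forall hkey)
end

section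
/- Let 𝒳 be a rearrangement-invariant space over a non-atomic probability space with 𝒳 ≠ L^∞, and suppose 𝒳 fails the AOCEA property, witnessed by X₀ ∈ 𝒳₊ with d(𝒞ℒ(X₀), 𝒳_a) > 0 where 𝒞ℒ(X₀) = co{X : X ∼ X₀}. Then d(𝒞ℒ(X₀), co(𝒳_a ∪ (−𝒳₊))) > 0, i.e., the convex hull of equidistributed copies of X₀ stays at positive distance from the convex hull of the union of the order continuous part and the negative cone. -/
open MeasureTheory Filter Set

/-- If `𝒳` fails the AOCEA property, witnessed by `X₀ ∈ 𝒳₊` with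
`d(𝒞ℒ(X₀), 𝒳_a) > 0` where `𝒞ℒ(X₀) = co{X : X ∼ X₀}`, then also
`d(𝒞ℒ(X₀), co(𝒳_a ∪ (−𝒳₊))) > 0`. -/
theorem dist_positive_to_hull {Ω : Type} [MeasurableSpace Ω] (μ : Measure Ω)
    [IsProbabilityMeasure μ] [NullSingletonClass μ]
    (S : RISpace μ) (hne : S.carrier ≠ RISpace.Linfty μ)
    (X₀ : Ω → ℝ) (hX₀ : X₀ ∈ S.carrier) (hX₀pos : ∀ᵐ ω ∂μ, 0 ≤ X₀ ω)
    (hfail : 0 < sInf {z : ℝ |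
      ∃ Z ∈ convexHull ℝ {X | X ∈ S.carrier ∧ μ.map X = μ.map X₀},
      ∃ V ∈ S.oc, z = S.N (Z - V)}) :
    0 < sInf {z : ℝ |
      ∃ Z ∈ convexHull ℝ {X | X ∈ S.carrier ∧ μ.map X = μ.map X₀},
      ∃ V ∈ convexHull ℝ
        (S.oc ∪ {W | ∃ U ∈ S.carrier, (∀ᵐ ω ∂μ, 0 ≤ U ω) ∧ W = -U}),
      z = S.N (Z - V)} := by
  classical
  set c := sInf {z : ℝ |
      ∃ Z ∈ convexHull ℝ {X | X ∈ S.carrier ∧ μ.map X = μ.map X₀},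
      ∃ V ∈ S.oc, z = S.N (Z - V)} with hcdef
  -- basic closure facts
  have sub_mem : ∀ {X Y : Ω → ℝ}, X ∈ S.carrier → Y ∈ S.carrier → X - Y ∈ S.carrier := by
    intro X Y hX hY
    have := S.add_mem hX (S.smul_mem (-1) hY)
    simpa [neg_one_smul, sub_eq_add_neg] using this
  have hcar_conv : Convex ℝ S.carrier := fun x hx y hy a b _ _ _ =>
    S.add_mem (S.smul_mem a hx) (S.smul_mem b hy)
  -- 0 ∈ oc
  have h0oc : (0 : Ω → ℝ) ∈ S.oc := by
    refine ⟨S.zero_mem, fun ε hε => ⟨1, one_pos, fun A _ _ => ?_⟩⟩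
    have : A.indicator (0 : Ω → ℝ) = 0 := by
      funext ω; simp
    rw [this, S.norm_zero']; exact hε
  -- oc is solid (downwards) in the relevant sense
  have hoc_le : ∀ {V' V'' : Ω → ℝ}, V' ∈ S.oc → AEMeasurable V'' μ →
      (∀ᵐ ω ∂μ, |V'' ω| ≤ |V' ω|) → V'' ∈ S.oc := by
    intro V' V'' hV' hmeas hle
    refine ⟨(S.solid V' hV'.1 V'' hmeas hle).1, fun ε hε => ?_⟩
    obtain ⟨δ, hδ, hprop⟩ := hV'.2 ε hε
    refine ⟨δ, hδ, fun A hA hμA => ?_⟩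
    have hindV' : A.indicator V' ∈ S.carrier := by
      refine (S.solid V' hV'.1 (A.indicator V')
        ((S.aemeasurable V' hV'.1).indicator hA) ?_).1
      filter_upwards with ω
      by_cases hωA : ω ∈ A <;> simp [Set.indicator_of_mem, Set.indicator_of_notMem, hωA]
    have : S.N (A.indicator V'') ≤ S.N (A.indicator V') := by
      refine (S.solid (A.indicator V') hindV' (A.indicator V'')
        (hmeas.indicator hA) ?_).2
      filter_upwards [hle] with ω hω
      by_cases hωA : ω ∈ A <;>
        simp [Set.indicator_of_mem, Set.indicator_of_notMem, hωA, hω]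
    exact lt_of_le_of_lt this (hprop A hA hμA)
  -- oc is convex
  have hoc_conv : Convex ℝ S.oc := by
    intro X hX Y hY a b ha hb hab
    refine ⟨hcar_conv hX.1 hY.1 ha hb hab, fun ε hε => ?_⟩
    obtain ⟨δ₁, hδ₁, h₁⟩ := hX.2 (ε / 2) (by linarith)
    obtain ⟨δ₂, hδ₂, h₂⟩ := hY.2 (ε / 2) (by linarith)
    refine ⟨min δ₁ δ₂, lt_min hδ₁ hδ₂, fun A hA hμA => ?_⟩
    have hμ₁ : μ A < ENNReal.ofReal δ₁ :=
      lt_of_lt_of_le hμA (ENNReal.ofReal_le_ofReal (min_le_left _ _))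
    have hμ₂ : μ A < ENNReal.ofReal δ₂ :=
      lt_of_lt_of_le hμA (ENNReal.ofReal_le_ofReal (min_le_right _ _))
    have hindX : A.indicator X ∈ S.carrier := by
      refine (S.solid X hX.1 (A.indicator X)
        ((S.aemeasurable X hX.1).indicator hA) ?_).1
      filter_upwards with ω
      by_cases hωA : ω ∈ A <;> simp [Set.indicator_of_mem, Set.indicator_of_notMem, hωA]
    have hindY : A.indicator Y ∈ S.carrier := by
      refine (S.solid Y hY.1 (A.indicator Y)
        ((S.aemeasurable Y hY.1).indicator hA) ?_).1
      filter_upwards with ω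
      by_cases hωA : ω ∈ A <;> simp [Set.indicator_of_mem, Set.indicator_of_notMem, hωA]
    have heq : A.indicator (a • X + b • Y) = a • A.indicator X + b • A.indicator Y := by
      funext ω
      by_cases hωA : ω ∈ A <;>
        simp [Set.indicator_of_mem, Set.indicator_of_notMem, hωA]
    have htri : S.N (A.indicator (a • X + b • Y)) ≤
        S.N (a • A.indicator X) + S.N (b • A.indicator Y) := by
      rw [heq]
      exact S.norm_triangle _ _ (S.smul_mem a hindX) (S.smul_mem b hindY)
    have hXa : S.N (a • A.indicator X) ≤ S.N (A.indicator X) := by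
      rw [S.norm_smul', abs_of_nonneg ha]
      calc a * S.N (A.indicator X) ≤ 1 * S.N (A.indicator X) :=
            mul_le_mul_of_nonneg_right (by linarith) (S.norm_nonneg' _)
        _ = S.N (A.indicator X) := one_mul _
    have hYb : S.N (b • A.indicator Y) ≤ S.N (A.indicator Y) := by
      rw [S.norm_smul', abs_of_nonneg hb]
      calc b * S.N (A.indicator Y) ≤ 1 * S.N (A.indicator Y) :=
            mul_le_mul_of_nonneg_right (by linarith) (S.norm_nonneg' _)
        _ = S.N (A.indicator Y) := one_mul _
    have := h₁ A hA hμ₁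
    have := h₂ A hA hμ₂
    linarith
  -- elements of the Z-hull are in carrier and a.e. nonnegative
  have hbase_pos : ∀ X ∈ ({X | X ∈ S.carrier ∧ μ.map X = μ.map X₀} : Set (Ω → ℝ)),
      ∀ᵐ ω ∂μ, 0 ≤ X ω := by
    rintro X ⟨hXc, hmap⟩
    have hXm := S.aemeasurable X hXc
    have hmap0 : μ.map X (Set.Iio 0) = μ.map X₀ (Set.Iio 0) := by rw [hmap]
    rw [Measure.map_apply_of_aemeasurable hXm measurableSet_Iio,
      Measure.map_apply_of_aemeasurable (S.aemeasurable X₀ hX₀) measurableSet_Iio] at hmap0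
    have h0 : μ (X₀ ⁻¹' Set.Iio 0) = 0 := by
      have := hX₀pos
      rw [ae_iff] at this
      convert this using 2
      ext ω; simp [Set.mem_preimage, not_le]
    rw [h0] at hmap0
    rw [ae_iff]
    convert hmap0 using 2
    ext ω; simp [Set.mem_preimage, not_le]
  have hhull_sub : convexHull ℝ {X | X ∈ S.carrier ∧ μ.map X = μ.map X₀} ⊆
      S.carrier ∩ {X | ∀ᵐ ω ∂μ, 0 ≤ X ω} := by
    apply convexHull_min
    · rintro X hX
      exact ⟨hX.1, hbase_pos X hX⟩
    · refine hcar_conv.inter ?_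
      intro X hX Y hY a b ha hb _
      show ∀ᵐ ω ∂μ, 0 ≤ (a • X + b • Y) ω
      filter_upwards [hX, hY] with ω h1 h2
      have : 0 ≤ a * X ω + b * Y ω := add_nonneg (mul_nonneg ha h1) (mul_nonneg hb h2)
      simpa using this
  -- the V-hull is contained in D = oc − positive cone
  have hD : convexHull ℝ
      (S.oc ∪ {W | ∃ U ∈ S.carrier, (∀ᵐ ω ∂μ, 0 ≤ U ω) ∧ W = -U}) ⊆
      {V | ∃ V' ∈ S.oc, ∃ U ∈ S.carrier, (∀ᵐ ω ∂μ, 0 ≤ U ω) ∧ V = V' - U} := by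
    apply convexHull_min
    · rintro V (hV | ⟨U, hU, hUpos, rfl⟩)
      · exact ⟨V, hV, 0, S.zero_mem, by filter_upwards with ω; simp, by simp⟩
      · exact ⟨0, h0oc, U, hU, hUpos, by simp⟩
    · rintro V₁ ⟨V₁', hV₁', U₁, hU₁, hU₁p, rfl⟩ V₂ ⟨V₂', hV₂', U₂, hU₂, hU₂p, rfl⟩
        a b ha hb hab
      refine ⟨a • V₁' + b • V₂', hoc_conv hV₁' hV₂' ha hb hab,
        a • U₁ + b • U₂, S.add_mem (S.smul_mem a hU₁) (S.smul_mem b hU₂), ?_, ?_⟩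
      · filter_upwards [hU₁p, hU₂p] with ω h1 h2
        have : 0 ≤ a * U₁ ω + b * U₂ ω := add_nonneg (mul_nonneg ha h1) (mul_nonneg hb h2)
        simpa using this
      · funext ω; simp; ring
  -- lower bound on the first infimum: it's below every element
  have hbdd : BddBelow {z : ℝ |
      ∃ Z ∈ convexHull ℝ {X | X ∈ S.carrier ∧ μ.map X = μ.map X₀},
      ∃ V ∈ S.oc, z = S.N (Z - V)} := by
    refine ⟨0, ?_⟩
    rintro z ⟨Z, _, V, _, rfl⟩
    exact S.norm_nonneg' _
  -- nonemptiness of the second set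
  have hne2 : {z : ℝ |
      ∃ Z ∈ convexHull ℝ {X | X ∈ S.carrier ∧ μ.map X = μ.map X₀},
      ∃ V ∈ convexHull ℝ
        (S.oc ∪ {W | ∃ U ∈ S.carrier, (∀ᵐ ω ∂μ, 0 ≤ U ω) ∧ W = -U}),
      z = S.N (Z - V)}.Nonempty := by
    refine ⟨S.N (X₀ - 0), X₀, subset_convexHull ℝ _ ⟨hX₀, rfl⟩, 0,
      subset_convexHull ℝ _ (Or.inl h0oc), rfl⟩
  refine lt_of_lt_of_le hfail (le_csInf hne2 ?_)
  rintro z ⟨Z, hZhull, V, hVhull, rfl⟩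
  obtain ⟨hZcar, hZpos⟩ := hhull_sub hZhull
  obtain ⟨V', hV'oc, U, hUcar, hUpos, rfl⟩ := hD hVhull
  -- the key comparison: T := Z - (V' - U)
  set T : Ω → ℝ := Z - (V' - U) with hTdef
  have hZae := S.aemeasurable Z hZcar
  have hV'ae := S.aemeasurable V' hV'oc.1
  have hUae := S.aemeasurable U hUcar
  have hTae : AEMeasurable T μ := hZae.sub (hV'ae.sub hUae)
  have hTcar : T ∈ S.carrier := sub_mem hZcar (sub_mem hV'oc.1 hUcar)
  set V'' : Ω → ℝ := fun ω => max (Z ω - |T ω|) 0 with hV''def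
  have hTabsae : AEMeasurable (fun ω => |T ω|) μ := by
    simpa [Real.norm_eq_abs] using hTae.norm
  have hV''ae : AEMeasurable V'' μ := (hZae.sub hTabsae).max aemeasurable_const
  have hV''le : ∀ᵐ ω ∂μ, |V'' ω| ≤ |V' ω| := by
    filter_upwards [hUpos] with ω hU0
    have hT : T ω = Z ω - (V' ω - U ω) := by simp [hTdef]
    have h1 : Z ω - |T ω| ≤ |V' ω| := by
      have h3 := le_abs_self (T ω)
      have h2 : V' ω ≤ |V' ω| := le_abs_self _
      linarith
    show |max (Z ω - |T ω|) 0| ≤ |V' ω|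
    rw [abs_of_nonneg (le_max_right _ _)]
    exact max_le h1 (abs_nonneg _)
  have hV''oc : V'' ∈ S.oc := hoc_le hV'oc hV''ae hV''le
  have hkey : S.N (Z - V'') ≤ S.N T := by
    refine (S.solid T hTcar (Z - V'') (hZae.sub hV''ae) ?_).2
    filter_upwards [hZpos] with ω hZ0
    have : Z ω - V'' ω = min (|T ω|) (Z ω) := by
      show Z ω - max (Z ω - |T ω|) 0 = min (|T ω|) (Z ω)
      rcases le_total (Z ω - |T ω|) 0 with h | h
      · rw [max_eq_right h, min_eq_right (by linarith)]; ring
      · rw [max_eq_left h, min_eq_left (by linarith)]; ring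
    rw [Pi.sub_apply, this, abs_of_nonneg (le_min (abs_nonneg _) hZ0)]
    exact min_le_left _ _
  have hmem1 : S.N (Z - V'') ∈ {z : ℝ |
      ∃ Z ∈ convexHull ℝ {X | X ∈ S.carrier ∧ μ.map X = μ.map X₀},
      ∃ V ∈ S.oc, z = S.N (Z - V)} := ⟨Z, hZhull, V'', hV''oc, rfl⟩
  calc c ≤ S.N (Z - V'') := csInf_le hbdd hmem1
    _ ≤ S.N T := hkey
    _ = S.N (Z - (V' - U)) := by rw [hTdef]
end
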